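/- arXiv:2208.05709 — 3 statements merged into one kernel-verified Lean document; each statement's English description precedes it below -/
import Mathlib

section
/- Let d ≥ 1, let Ω ⊆ ℝ^d be open, let B : Ω → ℝ be locally integrable, and let u : Ω → ℝ be locally Lipschitz. Then u is a weak solution with bulk term B on Ω if and only if u is both a weak subsolution and a weak supersolution with bulk term B on Ω. -/
open MeasureTheory Set Filter Topology
noncomputable section

/-- Euclidean space `ℝ^m`. -/
abbrev Euc (m : ℕ) : Type := EuclideanSpace ℝ (Fin m)

/-- `f` is locally Lipschitz on `Ω`: Lipschitz on every compact subset of `Ω`. -/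
def LocLipOn {m : ℕ} (Ω : Set (Euc m)) (f : Euc m → ℝ) : Prop :=
  ∀ A : Set (Euc m), IsCompact A → A ⊆ Ω → ∃ L : NNReal, LipschitzOnWith L f A

/-- The functional `J_B^A(v) = ∫_A (‖∇v‖ + v·B)`. -/
noncomputable def Jfun {m : ℕ} (B : Euc m → ℝ) (A : Set (Euc m)) (v : Euc m → ℝ) : ℝ :=
  ∫ x in A, (‖gradient v x‖ + v x * B x)

/-- `u` is a weak solution with bulk term `B` on `Ω`. -/
def IsWeakSol {m : ℕ} (Ω : Set (Euc m)) (B : Euc m → ℝ) (u : Euc m → ℝ) : Prop :=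
  ∀ A : Set (Euc m), IsCompact A → A ⊆ Ω →
    ∀ v : Euc m → ℝ, LocLipOn Ω v → {x | v x ≠ u x} ⊆ interior A →
      Jfun B A u ≤ Jfun B A v

/-- `u` is a weak subsolution with bulk term `B` on `Ω`: competitors lie below `u`. -/
def IsWeakSub {m : ℕ} (Ω : Set (Euc m)) (B : Euc m → ℝ) (u : Euc m → ℝ) : Prop :=
  ∀ A : Set (Euc m), IsCompact A → A ⊆ Ω →
    ∀ v : Euc m → ℝ, LocLipOn Ω v → (∀ x, v x ≤ u x) → {x | v x ≠ u x} ⊆ interior A →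
      Jfun B A u ≤ Jfun B A v

/-- `u` is a weak supersolution with bulk term `B` on `Ω`: competitors lie above `u`. -/
def IsWeakSup {m : ℕ} (Ω : Set (Euc m)) (B : Euc m → ℝ) (u : Euc m → ℝ) : Prop :=
  ∀ A : Set (Euc m), IsCompact A → A ⊆ Ω →
    ∀ v : Euc m → ℝ, LocLipOn Ω v → (∀ x, u x ≤ v x) → {x | v x ≠ u x} ⊆ interior A →
      Jfun B A u ≤ Jfun B A v

/-! ### Auxiliary lemmas -/

lemma norm_gradient_eq {d : ℕ} (f : Euc d → ℝ) (x : Euc d) :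
    ‖gradient f x‖ = ‖fderiv ℝ f x‖ := by
  rw [gradient]; exact LinearIsometryEquiv.norm_map _ _

/-- Almost everywhere on a measurable set where a function vanishes, its full derivative
vanishes (at points of differentiability). -/
lemma fderiv_ae_zero_on_zero_set {d : ℕ} (hd : 1 ≤ d) {h : Euc d → ℝ} {s : Set (Euc d)}
    (hs : MeasurableSet s) (h0 : ∀ x ∈ s, h x = 0) :
    ∀ᵐ x ∂(volume : Measure (Euc d)), x ∈ s → DifferentiableAt ℝ h x → fderiv ℝ h x = 0 := by
  set e : Euc d := EuclideanSpace.single ⟨0, hd⟩ 1 with he_def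
  have he : e ≠ 0 := by
    intro hc
    have h1 : e ⟨0, hd⟩ = (1 : ℝ) := by simp [he_def]
    rw [hc] at h1
    simp at h1
  set s' := s ∩ {x | DifferentiableAt ℝ h x} with hs'def
  have hs'm : MeasurableSet s' := hs.inter (measurableSet_of_differentiableAt ℝ h)
  set g : Euc d → Euc d := fun x => h x • e with hg
  have happ : ApproximatesLinearOn g (0 : Euc d →L[ℝ] Euc d) s' 0 := by
    intro x hx y hy
    simp [hg, h0 x hx.1, h0 y hy.1]
  have hder : ∀ x ∈ s', HasFDerivWithinAt g ((fderiv ℝ h x).smulRight e) s' x :=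
    fun x hx => (hx.2.hasFDerivAt.smul_const e).hasFDerivWithinAt
  have H := happ.norm_fderiv_sub_le (μ := volume) hs'm _ hder
  have H2 : ∀ᵐ x ∂(volume : Measure (Euc d)),
      x ∈ s' → ‖(fderiv ℝ h x).smulRight e - 0‖₊ ≤ 0 := (ae_restrict_iff' hs'm).mp H
  filter_upwards [H2] with x hx hxs hdiff
  have h1 : ((fderiv ℝ h x).smulRight e : Euc d →L[ℝ] Euc d) = 0 := by
    have h2 := hx ⟨hxs, hdiff⟩
    rw [sub_zero] at h2
    exact nnnorm_eq_zero.mp (le_antisymm h2 zero_le)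
  ext y
  have h3 : (fderiv ℝ h x y) • e = 0 := by
    have := congrFun (congrArg (DFunLike.coe) h1) y
    simpa using this
  rcases smul_eq_zero.mp h3 with h' | h'
  · simpa using h'
  · exact absurd h' he

/-- Integrability of the functional's integrand for a function Lipschitz on a compact
neighborhood of `A`. -/
lemma integrable_F {d : ℕ} {Ω : Set (Euc d)} {B : Euc d → ℝ}
    (hB : LocallyIntegrableOn B Ω) {A K : Set (Euc d)}
    (hA : IsCompact A) (hAΩ : A ⊆ Ω) (hAK : A ⊆ interior K)
    {f : Euc d → ℝ} {L : NNReal} (hf : LipschitzOnWith L f K) :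
    IntegrableOn (fun x => ‖gradient f x‖ + f x * B x) A volume := by
  have hAm : MeasurableSet A := hA.measurableSet
  have hnhds : ∀ x ∈ A, K ∈ 𝓝 x := fun x hx => mem_interior_iff_mem_nhds.mp (hAK hx)
  have hfin : (volume.restrict A) Set.univ < ⊤ := by
    simpa [Measure.restrict_apply_univ] using hA.measure_lt_top
  have hgradmeas : Measurable fun x => ‖gradient f x‖ := by
    have heq : (fun x => ‖gradient f x‖) = fun x => ‖fderiv ℝ f x‖ := by
      funext x; exact norm_gradient_eq f x
    rw [heq]; exact (measurable_fderiv ℝ f).norm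
  have hint1 : IntegrableOn (fun x => ‖gradient f x‖) A volume := by
    have hb : ∀ᵐ x ∂(volume.restrict A), ‖‖gradient f x‖‖ ≤ (L : ℝ) := by
      rw [ae_restrict_iff' hAm]
      refine ae_of_all _ fun x hx => ?_
      rw [Real.norm_of_nonneg (norm_nonneg _), norm_gradient_eq]
      exact norm_fderiv_le_of_lipschitzOn ℝ (hnhds x hx) hf
    exact (integrable_const_iff.mpr (Or.inr ⟨hfin⟩)).mono' hgradmeas.aestronglyMeasurable hb
  have hcont : ContinuousOn f A := hf.continuousOn.mono (hAK.trans interior_subset)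
  obtain ⟨C, hC⟩ := hA.exists_bound_of_continuousOn hcont
  have hBint : IntegrableOn B A volume := hB.integrableOn_compact_subset hAΩ hA
  have hint2 : IntegrableOn (fun x => f x * B x) A volume := by
    refine Integrable.bdd_mul (c := C) hBint (hcont.aestronglyMeasurable hAm) ?_
    rw [ae_restrict_iff' hAm]
    exact ae_of_all _ hC
  exact hint1.add hint2

/-- A locally Lipschitz function is a weak solution if and only if it is both a
weak subsolution and a weak supersolution (Section 6 of the paper). -/
theorem weakSolution_iff_sub_and_super
    {d : ℕ} (hd : 1 ≤ d) {Ω : Set (Euc d)} (hΩ : IsOpen Ω)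
    (B : Euc d → ℝ) (hB : LocallyIntegrableOn B Ω)
    (u : Euc d → ℝ) (hu : LocLipOn Ω u) :
    IsWeakSol Ω B u ↔ IsWeakSub Ω B u ∧ IsWeakSup Ω B u := by
  constructor
  · intro hsol
    exact ⟨fun A hA hAΩ v hv _ hsupp => hsol A hA hAΩ v hv hsupp,
           fun A hA hAΩ v hv _ hsupp => hsol A hA hAΩ v hv hsupp⟩
  · rintro ⟨hsub, hsup⟩ A hA hAΩ v hv hsupp
    obtain ⟨K, hK, hAK, hKΩ⟩ := exists_compact_between hA hΩ hAΩ
    set U := interior K with hUdef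
    have hUopen : IsOpen U := isOpen_interior
    have hUK : U ⊆ K := interior_subset
    have hAU : A ⊆ U := hAK
    have hAm : MeasurableSet A := hA.measurableSet
    obtain ⟨Lu, hLu⟩ := hu K hK hKΩ
    obtain ⟨Lv, hLv⟩ := hv K hK hKΩ
    set L : NNReal := max Lu Lv with hLdef
    have hLu' : LipschitzOnWith L u K := fun x hx y hy =>
      (hLu hx hy).trans (by gcongr; exact_mod_cast le_max_left _ _)
    have hLv' : LipschitzOnWith L v K := fun x hx y hy =>
      (hLv hx hy).trans (by gcongr; exact_mod_cast le_max_right _ _)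
    set w1 : Euc d → ℝ := fun x => min (v x) (u x) with hw1def
    set w2 : Euc d → ℝ := fun x => max (v x) (u x) with hw2def
    have hw1K : LipschitzOnWith L w1 K := by
      have h : LipschitzWith (max L L) (K.restrict w1) := hLv'.to_restrict.min hLu'.to_restrict
      rw [max_self] at h
      exact lipschitzOnWith_iff_restrict.mpr h
    have hw2K : LipschitzOnWith L w2 K := by
      have h : LipschitzWith (max L L) (K.restrict w2) := hLv'.to_restrict.max hLu'.to_restrict
      rw [max_self] at h
      exact lipschitzOnWith_iff_restrict.mpr h
    -- min and max are locally Lipschitz on Ω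
    have hw1 : LocLipOn Ω w1 := by
      intro A' hA' hA'Ω
      obtain ⟨L1, h1⟩ := hv A' hA' hA'Ω
      obtain ⟨L2, h2⟩ := hu A' hA' hA'Ω
      have h : LipschitzWith (max L1 L2) (A'.restrict w1) := h1.to_restrict.min h2.to_restrict
      exact ⟨max L1 L2, lipschitzOnWith_iff_restrict.mpr h⟩
    have hw2 : LocLipOn Ω w2 := by
      intro A' hA' hA'Ω
      obtain ⟨L1, h1⟩ := hv A' hA' hA'Ω
      obtain ⟨L2, h2⟩ := hu A' hA' hA'Ω
      have h : LipschitzWith (max L1 L2) (A'.restrict w2) := h1.to_restrict.max h2.to_restrict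
      exact ⟨max L1 L2, lipschitzOnWith_iff_restrict.mpr h⟩
    -- the competitors agree with u off the interior of A
    have hsupp1 : {x | w1 x ≠ u x} ⊆ interior A := by
      intro x hx
      refine hsupp ?_
      intro hvu
      exact hx (by simp [hw1def, hvu])
    have hsupp2 : {x | w2 x ≠ u x} ⊆ interior A := by
      intro x hx
      refine hsupp ?_
      intro hvu
      exact hx (by simp [hw2def, hvu])
    have h1 : Jfun B A u ≤ Jfun B A w1 :=
      hsub A hA hAΩ w1 hw1 (fun x => min_le_right _ _) hsupp1
    have h2 : Jfun B A u ≤ Jfun B A w2 :=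
      hsup A hA hAΩ w2 hw2 (fun x => le_max_right _ _) hsupp2
    -- the coincidence set E of u and v inside U
    have hcontvu : ContinuousOn (fun x => v x - u x) U :=
      ((hLv'.mono hUK).continuousOn).sub ((hLu'.mono hUK).continuousOn)
    have hEopen2 : IsOpen (U ∩ (fun x => v x - u x) ⁻¹' ({0}ᶜ)) :=
      hcontvu.isOpen_inter_preimage hUopen isOpen_compl_singleton
    set E : Set (Euc d) := U \ (U ∩ (fun x => v x - u x) ⁻¹' ({0}ᶜ)) with hEdef
    have hEm : MeasurableSet E := hUopen.measurableSet.diff hEopen2.measurableSet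
    have hEmem : ∀ {x}, x ∈ E → v x = u x := by
      intro x hx
      by_contra hne
      exact hx.2 ⟨hx.1, by simpa [sub_eq_zero] using hne⟩
    have hEmem' : ∀ {x}, x ∈ U → v x = u x → x ∈ E := by
      intro x hxU heq
      refine ⟨hxU, ?_⟩
      intro hc
      exact hc.2 (by simpa [sub_eq_zero] using heq)
    -- a.e. differentiability on U
    have Du : ∀ᵐ x ∂(volume : Measure (Euc d)), x ∈ U → DifferentiableAt ℝ u x := by
      filter_upwards [(hLu'.mono hUK).ae_differentiableWithinAt_of_mem] with x hx hxU
      exact (hx hxU).differentiableAt (hUopen.mem_nhds hxU)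
    have Dv : ∀ᵐ x ∂(volume : Measure (Euc d)), x ∈ U → DifferentiableAt ℝ v x := by
      filter_upwards [(hLv'.mono hUK).ae_differentiableWithinAt_of_mem] with x hx hxU
      exact (hx hxU).differentiableAt (hUopen.mem_nhds hxU)
    have Dw1 : ∀ᵐ x ∂(volume : Measure (Euc d)), x ∈ U → DifferentiableAt ℝ w1 x := by
      filter_upwards [(hw1K.mono hUK).ae_differentiableWithinAt_of_mem] with x hx hxU
      exact (hx hxU).differentiableAt (hUopen.mem_nhds hxU)
    have Dw2 : ∀ᵐ x ∂(volume : Measure (Euc d)), x ∈ U → DifferentiableAt ℝ w2 x := by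
      filter_upwards [(hw2K.mono hUK).ae_differentiableWithinAt_of_mem] with x hx hxU
      exact (hx hxU).differentiableAt (hUopen.mem_nhds hxU)
    -- on E, the derivatives of v - u, w1 - u, w2 - u vanish a.e.
    have hE1 := fderiv_ae_zero_on_zero_set hd (h := fun y => v y - u y) hEm
      (fun x hx => sub_eq_zero.mpr (hEmem hx))
    have hE2 := fderiv_ae_zero_on_zero_set hd (h := fun y => w1 y - u y) hEm
      (fun x hx => sub_eq_zero.mpr (by simp [hw1def, hEmem hx]))
    have hE3 := fderiv_ae_zero_on_zero_set hd (h := fun y => w2 y - u y) hEm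
      (fun x hx => sub_eq_zero.mpr (by simp [hw2def, hEmem hx]))
    -- continuity of u, v at points of U
    have hcu : ∀ x ∈ U, ContinuousAt u x := fun x hx =>
      hLu'.continuousOn.continuousAt (mem_interior_iff_mem_nhds.mp hx)
    have hcv : ∀ x ∈ U, ContinuousAt v x := fun x hx =>
      hLv'.continuousOn.continuousAt (mem_interior_iff_mem_nhds.mp hx)
    -- the key a.e. identity on A
    have key : ∀ᵐ x ∂(volume.restrict A),
        (‖gradient w1 x‖ + w1 x * B x) + (‖gradient w2 x‖ + w2 x * B x)
          = (‖gradient v x‖ + v x * B x) + (‖gradient u x‖ + u x * B x) := by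
      filter_upwards [ae_restrict_mem hAm, ae_restrict_of_ae Du, ae_restrict_of_ae Dv,
        ae_restrict_of_ae Dw1, ae_restrict_of_ae Dw2, ae_restrict_of_ae hE1,
        ae_restrict_of_ae hE2, ae_restrict_of_ae hE3] with x hxA hDu hDv hDw1 hDw2 hE1' hE2' hE3'
      have hxU : x ∈ U := hAU hxA
      have hgrads : ‖gradient w1 x‖ + ‖gradient w2 x‖ = ‖gradient v x‖ + ‖gradient u x‖ := by
        rcases lt_trichotomy (v x) (u x) with hlt | heq | hgt
        · have hev : ∀ᶠ y in 𝓝 x, v y < u y := (hcv x hxU).eventually_lt (hcu x hxU) hlt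
          have e1 : w1 =ᶠ[𝓝 x] v := hev.mono fun y hy => min_eq_left hy.le
          have e2 : w2 =ᶠ[𝓝 x] u := hev.mono fun y hy => max_eq_right hy.le
          rw [norm_gradient_eq, norm_gradient_eq, norm_gradient_eq, norm_gradient_eq,
            e1.fderiv_eq, e2.fderiv_eq]
        · have hxE : x ∈ E := hEmem' hxU heq
          have e1 : fderiv ℝ v x = fderiv ℝ u x := by
            have h := hE1' hxE (hDv hxU |>.sub (hDu hxU))
            rw [fderiv_fun_sub (hDv hxU) (hDu hxU)] at h
            exact sub_eq_zero.mp h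
          have e2 : fderiv ℝ w1 x = fderiv ℝ u x := by
            have h := hE2' hxE (hDw1 hxU |>.sub (hDu hxU))
            rw [fderiv_fun_sub (hDw1 hxU) (hDu hxU)] at h
            exact sub_eq_zero.mp h
          have e3 : fderiv ℝ w2 x = fderiv ℝ u x := by
            have h := hE3' hxE (hDw2 hxU |>.sub (hDu hxU))
            rw [fderiv_fun_sub (hDw2 hxU) (hDu hxU)] at h
            exact sub_eq_zero.mp h
          rw [norm_gradient_eq, norm_gradient_eq, norm_gradient_eq, norm_gradient_eq,
            e1, e2, e3]
        · have hev : ∀ᶠ y in 𝓝 x, u y < v y := (hcu x hxU).eventually_lt (hcv x hxU) hgt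
          have e1 : w1 =ᶠ[𝓝 x] u := hev.mono fun y hy => min_eq_right hy.le
          have e2 : w2 =ᶠ[𝓝 x] v := hev.mono fun y hy => max_eq_left hy.le
          rw [norm_gradient_eq, norm_gradient_eq, norm_gradient_eq, norm_gradient_eq,
            e1.fderiv_eq, e2.fderiv_eq]
          ring
      have hprod : w1 x * B x + w2 x * B x = v x * B x + u x * B x := by
        rw [← add_mul, ← add_mul, min_add_max]
      linarith
    -- integrability of the four integrands
    have Iu := integrable_F hB hA hAΩ hAK hLu'
    have Iv := integrable_F hB hA hAΩ hAK hLv'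
    have Iw1 := integrable_F hB hA hAΩ hAK hw1K
    have Iw2 := integrable_F hB hA hAΩ hAK hw2K
    -- the integral identity
    have hId : Jfun B A w1 + Jfun B A w2 = Jfun B A v + Jfun B A u := by
      have e1 : Jfun B A w1 + Jfun B A w2
          = ∫ x in A, ((‖gradient w1 x‖ + w1 x * B x) + (‖gradient w2 x‖ + w2 x * B x)) :=
        (integral_add Iw1 Iw2).symm
      have e2 : Jfun B A v + Jfun B A u
          = ∫ x in A, ((‖gradient v x‖ + v x * B x) + (‖gradient u x‖ + u x * B x)) :=
        (integral_add Iv Iu).symm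
      rw [e1, e2]
      exact integral_congr_ae key
    linarith
end
end

section
/- Let C₂ ≥ 0 and λ ≥ 0, set A := 2(C₂ + λ + 4), let b_L > 0, and let 0 < ε ≤ e^{−A·b_L}. Define f : ℝ → ℝ by f(b) := (ε/A)·(e^{−A·b} − 1). Then for every b ∈ [0, b_L]: f'(b)·(C₂ + 2 + λ) + ε²·f''(b)/(ε² + f'(b)²) − f'(b)² − ε² > 0, where f'(b) = −ε·e^{−A·b} and f''(b) = A·ε·e^{−A·b} are the first and second derivatives of f. -/
open Set
noncomputable section

/-- The barrier differential inequality (eq_subsolODI) from the proof of Theorem 4.4: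
for `A = 2(C₂ + λ + 4)`, `0 < ε ≤ e^{−A·b_L}` and `f(b) = (ε/A)(e^{−A·b} − 1)`, with
`f'(b) = −ε e^{−A·b}` and `f''(b) = A ε e^{−A·b}` its derivatives, one has
`f'·(C₂ + 2 + λ) + ε²f''/(ε² + f'²) − f'² − ε² > 0` on `[0, b_L]`. -/
theorem barrier_subsolution_ODI
    (C₂ lam A bL ε : ℝ)
    (hC₂ : 0 ≤ C₂) (hlam : 0 ≤ lam) (hA : A = 2 * (C₂ + lam + 4))
    (hbL : 0 < bL) (hε0 : 0 < ε) (hε : ε ≤ Real.exp (-A * bL))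
    (f f' f'' : ℝ → ℝ)
    (hf : f = fun b => (ε / A) * (Real.exp (-A * b) - 1))
    (hf' : f' = fun b => -ε * Real.exp (-A * b))
    (hf'' : f'' = fun b => A * ε * Real.exp (-A * b)) :
    ∀ b ∈ Icc (0 : ℝ) bL,
      (HasDerivAt f (f' b) b ∧ HasDerivAt f' (f'' b) b) ∧
      0 < f' b * (C₂ + 2 + lam) + ε ^ 2 * f'' b / (ε ^ 2 + f' b ^ 2)
            - f' b ^ 2 - ε ^ 2 := by
  have hApos : 0 < A := by nlinarith
  have hAne : A ≠ 0 := ne_of_gt hApos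
  intro b hb
  obtain ⟨hb0, hbL'⟩ := hb
  set E := Real.exp (-A * b) with hE
  have hEpos : 0 < E := Real.exp_pos _
  have hE1 : E ≤ 1 := by
    rw [hE, ← Real.exp_zero]
    exact Real.exp_le_exp.2 (by nlinarith)
  have hεE : ε ≤ E := le_trans hε (Real.exp_le_exp.2 (by nlinarith))
  have hε1 : ε < 1 := lt_of_le_of_lt hε (by
    rw [← Real.exp_zero]
    exact Real.exp_lt_exp.2 (by nlinarith))
  -- derivatives
  have hinner : HasDerivAt (fun b : ℝ => -A * b) (-A) b := by
    simpa using (hasDerivAt_id b).const_mul (-A)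
  have hexp : HasDerivAt (fun b : ℝ => Real.exp (-A * b)) (Real.exp (-A * b) * (-A)) b :=
    (Real.hasDerivAt_exp (-A * b)).comp b hinner
  have hd1 : HasDerivAt f (f' b) b := by
    rw [hf, hf']
    have := ((hexp.sub_const 1).const_mul (ε / A))
    refine this.congr_deriv ?_
    field_simp
  have hd2 : HasDerivAt f' (f'' b) b := by
    rw [hf', hf'']
    have := hexp.const_mul (-ε)
    refine this.congr_deriv ?_
    ring
  refine ⟨⟨hd1, hd2⟩, ?_⟩
  rw [hf', hf'']
  simp only [← hE]
  have hden : (0:ℝ) < ε ^ 2 + (-ε * E) ^ 2 := by positivity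
  have hkey : ε ^ 2 * (A * ε * E) / (ε ^ 2 + (-ε * E) ^ 2) = ε * A * E / (1 + E ^ 2) := by
    rw [div_eq_div_iff hden.ne' (by positivity)]
    ring
  rw [hkey]
  have hlb : ε * E * (C₂ + lam + 4) ≤ ε * A * E / (1 + E ^ 2) := by
    rw [le_div_iff₀ (by positivity), hA]
    nlinarith [mul_nonneg (mul_nonneg (mul_pos hε0 hEpos).le
      (by nlinarith : (0:ℝ) ≤ C₂ + lam + 4)) (by nlinarith : (0:ℝ) ≤ 1 - E ^ 2)]
  nlinarith [mul_pos hε0 hEpos, mul_nonneg (sub_nonneg.2 hεE) hε0.le,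
    mul_pos (mul_pos hε0 hEpos) (sub_pos.2 hε1),
    mul_nonneg (mul_nonneg hε0.le hε0.le) (sub_nonneg.2 hE1),
    mul_nonneg (mul_nonneg (sub_nonneg.2 hεE) hε0.le) hEpos.le]
end
end

section
/- Let d ≥ 1, let Ω ⊆ ℝ^d be open, and let C ≥ 0. For each i ∈ ℕ, let V_i : Ω → ℝ^d be measurable with ‖V_i(x)‖ ≤ C for all x ∈ Ω, and let ν_i : Ω → ℝ^d be measurable with ‖ν_i(x)‖ = 1 and V_i(x) = ‖V_i(x)‖·ν_i(x) for almost every x ∈ Ω. Let ν : Ω → ℝ^d be continuous with ‖ν(x)‖ = 1 for all x, and suppose ν_i → ν uniformly on every compact subset of Ω. Assume that for every continuous compactly supported vector field W : Ω → ℝ^d one has ∫_Ω ⟨V_i(x), W(x)⟩ dx → 0 as i → ∞. Then ‖V_i‖ → 0 in L¹_loc(Ω), i.e. ∫_A ‖V_i(x)‖ dx → 0 as i → ∞ for every compact set A ⊆ Ω. -/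
open MeasureTheory Set Filter Topology
noncomputable section

set_option maxHeartbeats 1000000 in
/-- Euclidean abstraction of Lemma 5.8 (L¹ convergence of the gradients inside a jump
region): uniformly bounded vector fields `V_i` with unit directions `ν_i` converging
locally uniformly to a continuous unit field `ν`, and converging weakly to `0` against
compactly supported continuous test fields, converge to `0` in `L¹_loc`. -/
theorem l1_convergence_in_jump_region
    {d : ℕ} (hd : 1 ≤ d) {Ω : Set (Euc d)} (hΩ : IsOpen Ω) (C : ℝ) (hC : 0 ≤ C)
    (V : ℕ → Euc d → Euc d) (νi : ℕ → Euc d → Euc d) (ν : Euc d → Euc d)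
    (hVmeas : ∀ i, Measurable (V i))
    (hVbd : ∀ i, ∀ x ∈ Ω, ‖V i x‖ ≤ C)
    (hνimeas : ∀ i, Measurable (νi i))
    (hpolar : ∀ i, ∀ᵐ x : Euc d, x ∈ Ω → (‖νi i x‖ = 1 ∧ V i x = ‖V i x‖ • νi i x))
    (hνcont : ContinuousOn ν Ω) (hνunit : ∀ x ∈ Ω, ‖ν x‖ = 1)
    (hνconv : ∀ A : Set (Euc d), IsCompact A → A ⊆ Ω →
      TendstoUniformlyOn (fun i => νi i) ν atTop A)
    (hweak : ∀ W : Euc d → Euc d, Continuous W → HasCompactSupport W → tsupport W ⊆ Ω →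
      Tendsto (fun i => ∫ x in Ω, (inner ℝ (V i x) (W x) : ℝ)) atTop (𝓝 0)) :
    ∀ A : Set (Euc d), IsCompact A → A ⊆ Ω →
      Tendsto (fun i => ∫ x in A, ‖V i x‖) atTop (𝓝 0) := by
  intro A hA hAΩ
  -- a compact set K with A ⊆ interior K, K ⊆ Ω
  obtain ⟨K, hK, hAK, hKΩ⟩ := exists_compact_between hA hΩ hAΩ
  -- cutoff function φ
  obtain ⟨φ, hφsupp, hφ1, hφrange⟩ :=
    exists_tsupport_one_of_isOpen_isClosed isOpen_interior
      (hK.closure_of_subset interior_subset) hA.isClosed hAK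
  have hφK : tsupport φ ⊆ K := hφsupp.trans interior_subset
  have hφcomp : HasCompactSupport (φ : Euc d → ℝ) :=
    HasCompactSupport.of_support_subset_isCompact hK (subset_tsupport _ |>.trans hφK)
  -- Tietze extension of ν from K
  have hνK : Continuous (K.restrict ν) :=
    ContinuousOn.restrict (hνcont.mono hKΩ)
  obtain ⟨g, hg⟩ := ContinuousMap.exists_restrict_eq (Y := Euc d) hK.isClosed
    ⟨K.restrict ν, hνK⟩
  have hgν : ∀ x ∈ K, g x = ν x := by
    intro x hx
    have := congrFun (congrArg DFunLike.coe hg) ⟨x, hx⟩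
    simp at this; exact this
  -- the test field W
  set W : Euc d → Euc d := fun x => φ x • g x with hW
  have hWcont : Continuous W := φ.continuous.smul g.continuous
  have hWsupp : tsupport W ⊆ tsupport φ := tsupport_smul_subset_left _ _
  have hWcomp : HasCompactSupport W :=
    HasCompactSupport.of_support_subset_isCompact hK
      ((subset_tsupport _).trans (hWsupp.trans hφK))
  have hWΩ : tsupport W ⊆ Ω := hWsupp.trans (hφK.trans hKΩ)
  have hweakW := hweak W hWcont hWcomp hWΩ
  -- integrability facts
  have hWnormint : Integrable (fun x => C * ‖W x‖) :=
    (continuous_const.mul hWcont.norm).integrable_of_hasCompactSupport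
      (hWcomp.norm.mul_left)
  have hVWmeas : ∀ i, Measurable fun x => (inner ℝ (V i x) (W x) : ℝ) := fun i =>
    (hVmeas i).inner hWcont.measurable
  have hmuA : volume A < ⊤ := hA.measure_lt_top
  have hFact : Fact (volume A < ⊤) := ⟨hmuA⟩
  set μA : ℝ := (volume A).toReal with hμA
  have hμA0 : 0 ≤ μA := ENNReal.toReal_nonneg
  -- main estimate
  rw [NormedAddCommGroup.tendsto_nhds_zero]
  intro ε hε
  set ε₁ : ℝ := min 1 (ε / (2 * (C * μA + 1))) with hε₁def
  have hden : 0 < 2 * (C * μA + 1) := by positivity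
  have hε₁pos : 0 < ε₁ := lt_min one_pos (div_pos hε hden)
  have hε₁le : C * ε₁ * μA ≤ ε / 2 := by
    have h1 : ε₁ ≤ ε / (2 * (C * μA + 1)) := min_le_right _ _
    have h2 : C * ε₁ * μA ≤ C * μA * (ε / (2 * (C * μA + 1))) := by
      rw [mul_comm (C * μA)]
      calc C * ε₁ * μA = (C * μA) * ε₁ := by ring
        _ ≤ (C * μA) * (ε / (2 * (C * μA + 1))) := by
            exact mul_le_mul_of_nonneg_left h1 (by positivity)
        _ = (ε / (2 * (C * μA + 1))) * (C * μA) := by ring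
    have heq : (C * μA + 1) * (ε / (2 * (C * μA + 1))) = ε / 2 := by
      field_simp
    have h4 : C * μA * (ε / (2 * (C * μA + 1))) ≤ (C * μA + 1) * (ε / (2 * (C * μA + 1))) :=
      mul_le_mul_of_nonneg_right (by linarith) (div_nonneg hε.le hden.le)
    have h3 : C * μA * (ε / (2 * (C * μA + 1))) ≤ ε / 2 := by rw [heq] at h4; exact h4
    linarith
  -- uniform convergence on K
  have huc := (Metric.tendstoUniformlyOn_iff.mp (hνconv K hK hKΩ)) ε₁ hε₁pos
  have hw2 : ∀ᶠ i in atTop, |∫ x in Ω, (inner ℝ (V i x) (W x) : ℝ)| < ε / 2 := by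
    have h := hweakW
    rw [NormedAddCommGroup.tendsto_nhds_zero] at h
    exact (h (ε/2) (by linarith)).mono fun i hi => by simpa [Real.norm_eq_abs] using hi
  filter_upwards [huc, hw2] with i hui hwi
  -- pointwise a.e. facts
  have hae : ∀ᵐ x, x ∈ Ω → (‖νi i x‖ = 1 ∧ V i x = ‖V i x‖ • νi i x) := hpolar i
  -- key pointwise bound
  have hkey : ∀ x, x ∈ Ω → (‖νi i x‖ = 1 ∧ V i x = ‖V i x‖ • νi i x) →
      (0 ≤ (inner ℝ (V i x) (W x) : ℝ)) ∧
      (x ∈ A → ‖V i x‖ ≤ (inner ℝ (V i x) (W x) : ℝ) + C * ε₁) := by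
    intro x hxΩ ⟨hν1, hpol⟩
    have hVx : ‖V i x‖ ≤ C := hVbd i x hxΩ
    by_cases hxK : x ∈ tsupport φ
    · have hxK' : x ∈ K := hφK hxK
      have hgx : g x = ν x := hgν x hxK'
      have hdist : ‖νi i x - ν x‖ < ε₁ := by
        have := hui x hxK'
        rwa [dist_comm, dist_eq_norm] at this
      have hip : (1 : ℝ) - ε₁ ≤ inner ℝ (νi i x) (ν x) := by
        have h := real_inner_self_eq_norm_sq (νi i x)
        have e1 : (inner ℝ (νi i x) (νi i x - ν x) : ℝ) ≤ ‖νi i x - ν x‖ := by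
          calc (inner ℝ (νi i x) (νi i x - ν x) : ℝ) ≤ ‖νi i x‖ * ‖νi i x - ν x‖ :=
              real_inner_le_norm _ _
            _ = ‖νi i x - ν x‖ := by rw [hν1, one_mul]
        have e2 : (inner ℝ (νi i x) (ν x) : ℝ)
            = inner ℝ (νi i x) (νi i x) - inner ℝ (νi i x) (νi i x - ν x) := by
          rw [inner_sub_right]; ring
        have e3 : (inner ℝ (νi i x) (νi i x) : ℝ) = 1 := by
          rw [real_inner_self_eq_norm_sq, hν1]; norm_num
        rw [e2, e3]; linarith
      have hinner : (inner ℝ (V i x) (ν x) : ℝ) = ‖V i x‖ * inner ℝ (νi i x) (ν x) := by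
        conv_lhs => rw [hpol]
        rw [real_inner_smul_left]
      have hWx : W x = φ x • ν x := by rw [hW]; simp [hgx]
      have hinnerW : (inner ℝ (V i x) (W x) : ℝ) = φ x * (‖V i x‖ * inner ℝ (νi i x) (ν x)) := by
        rw [hWx, real_inner_smul_right, hinner]
      constructor
      · rw [hinnerW]
        have h1 : 0 ≤ φ x := (hφrange x).1
        have h2 : (0:ℝ) ≤ inner ℝ (νi i x) (ν x) := by
          have : ε₁ ≤ 1 := min_le_left _ _
          linarith
        positivity
      · intro hxA
        have hφ1x : φ x = 1 := hφ1 hxA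
        rw [hinnerW, hφ1x, one_mul]
        have : ‖V i x‖ * (1 - ε₁) ≤ ‖V i x‖ * inner ℝ (νi i x) (ν x) :=
          mul_le_mul_of_nonneg_left hip (norm_nonneg _)
        have h4 : ‖V i x‖ * ε₁ ≤ C * ε₁ :=
          mul_le_mul_of_nonneg_right hVx hε₁pos.le
        nlinarith [norm_nonneg (V i x)]
    · have hφ0 : φ x = 0 := image_eq_zero_of_notMem_tsupport hxK
      have hWx : W x = 0 := by rw [hW]; simp [hφ0]
      constructor
      · rw [hWx, inner_zero_right]
      · intro hxA
        exact absurd hφ0 (by rw [hφ1 hxA]; norm_num)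
  -- integrability
  have hintΩ : IntegrableOn (fun x => (inner ℝ (V i x) (W x) : ℝ)) Ω := by
    apply Integrable.mono' (hWnormint.restrict)
      ((hVWmeas i).aestronglyMeasurable)
    filter_upwards [ae_restrict_mem hΩ.measurableSet] with x hx
    calc ‖(inner ℝ (V i x) (W x) : ℝ)‖ ≤ ‖V i x‖ * ‖W x‖ := by
          rw [Real.norm_eq_abs]; exact abs_real_inner_le_norm _ _
      _ ≤ C * ‖W x‖ := mul_le_mul_of_nonneg_right (hVbd i x hx) (norm_nonneg _)
  have hintA : IntegrableOn (fun x => (inner ℝ (V i x) (W x) : ℝ)) A :=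
    hintΩ.mono_set hAΩ
  have hintVA : IntegrableOn (fun x => ‖V i x‖) A := by
    apply Integrable.mono' (integrable_const C)
      ((hVmeas i).norm.aestronglyMeasurable)
    filter_upwards [ae_restrict_mem hA.isClosed.measurableSet] with x hx
    simpa using hVbd i x (hAΩ hx)
  -- step 1: ∫_A ‖V‖ ≤ ∫_A ⟨V,W⟩ + C ε₁ μA
  have hstep1 : ∫ x in A, ‖V i x‖ ≤ (∫ x in A, (inner ℝ (V i x) (W x) : ℝ)) + C * ε₁ * μA := by
    have : ∫ x in A, ‖V i x‖ ≤ ∫ x in A, ((inner ℝ (V i x) (W x) : ℝ) + C * ε₁) := by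
      apply integral_mono_ae hintVA (hintA.add (integrable_const _))
      filter_upwards [ae_restrict_mem hA.isClosed.measurableSet, ae_restrict_of_ae hae]
        with x hx hpx
      exact le_of_le_of_eq ((hkey x (hAΩ hx) (hpx (hAΩ hx))).2 hx) rfl
    rwa [integral_add hintA (integrable_const _), setIntegral_const, smul_eq_mul,
      mul_comm (volume.real A) (C * ε₁)] at this
  -- step 2: ∫_A ⟨V,W⟩ ≤ ∫_Ω ⟨V,W⟩
  have hstep2 : (∫ x in A, (inner ℝ (V i x) (W x) : ℝ)) ≤ ∫ x in Ω, (inner ℝ (V i x) (W x) : ℝ) := by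
    apply setIntegral_mono_set hintΩ
    · filter_upwards [ae_restrict_mem hΩ.measurableSet, ae_restrict_of_ae hae]
        with x hx hpx
      exact (hkey x hx (hpx hx)).1
    · exact HasSubset.Subset.eventuallyLE hAΩ
  have hnonneg : 0 ≤ ∫ x in A, ‖V i x‖ := integral_nonneg fun x => norm_nonneg _
  rw [Real.norm_eq_abs, abs_of_nonneg hnonneg]
  calc ∫ x in A, ‖V i x‖ ≤ (∫ x in Ω, (inner ℝ (V i x) (W x) : ℝ)) + C * ε₁ * μA := by linarith
    _ ≤ |∫ x in Ω, (inner ℝ (V i x) (W x) : ℝ)| + C * ε₁ * μA := by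
        have := le_abs_self (∫ x in Ω, (inner ℝ (V i x) (W x) : ℝ)); linarith
    _ < ε / 2 + ε / 2 := by linarith
    _ = ε := by ring
end
end
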